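/- Let c ∈ (0,1) and define G_c(x) := x²·sinh(2πx/3)/(cosh(2πx/3) − cos(2πc)). Then there is an absolute constant C such that for all real w₁ ≠ 0 and w₂: (1/|w₁|)·|G_c(w₂) − G_c(w₂ + w₁/2)| ≤ C·(w₁² + w₂² + |w₂|)·(1/c² + 1/(1−c)²). -/

import Mathlib

open Real

noncomputable def Gfun (c : ℝ) (x : ℝ) : ℝ :=
  x ^ 2 * (Real.sinh (2 * π * x / 3) / (Real.cosh (2 * π * x / 3) - Real.cos (2 * π * c)))

/-- `|sinh t| ≤ |t| * cosh t`. -/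
lemma abs_sinh_le_abs_mul_cosh (t : ℝ) : |Real.sinh t| ≤ |t| * Real.cosh t := by
  have hmono : Monotone (fun s : ℝ => s * Real.cosh s - Real.sinh s) := by
    have hderiv : ∀ s : ℝ, HasDerivAt (fun s : ℝ => s * Real.cosh s - Real.sinh s)
        (s * Real.sinh s) s := by
      intro s
      have h1 : HasDerivAt (fun s : ℝ => s * Real.cosh s)
          (1 * Real.cosh s + s * Real.sinh s) s :=
        (hasDerivAt_id s).mul (Real.hasDerivAt_cosh s)
      have h2 : HasDerivAt (fun s : ℝ => s * Real.cosh s - Real.sinh s)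
          (1 * Real.cosh s + s * Real.sinh s - Real.cosh s) s := h1.sub (Real.hasDerivAt_sinh s)
      convert h2 using 1; ring
    apply monotone_of_deriv_nonneg
    · exact fun s => (hderiv s).differentiableAt
    · intro s
      rw [(hderiv s).deriv]
      rcases le_total 0 s with hs | hs
      · exact mul_nonneg hs (by simpa using hs)
      · have hs' : Real.sinh s ≤ 0 := by simpa using hs
        nlinarith
  have key : ∀ s : ℝ, 0 ≤ s → Real.sinh s ≤ s * Real.cosh s := by
    intro s hs
    have := hmono hs
    simpa using this
  rcases le_total 0 t with ht | ht
  · rw [abs_of_nonneg ht, abs_of_nonneg (by simpa using ht : (0:ℝ) ≤ Real.sinh t)]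
    exact key t ht
  · rw [abs_of_nonpos ht, abs_of_nonpos (by simpa using ht : Real.sinh t ≤ 0)]
    have := key (-t) (by linarith)
    rw [Real.sinh_neg, Real.cosh_neg] at this
    linarith

/-- Derivative of `Gfun c`. -/
noncomputable def Gfun' (c : ℝ) (x : ℝ) : ℝ :=
  2 * x * (Real.sinh (2 * π * x / 3) / (Real.cosh (2 * π * x / 3) - Real.cos (2 * π * c)))
    + x ^ 2 * ((2 * π / 3) * (1 - Real.cos (2 * π * c) * Real.cosh (2 * π * x / 3))
        / (Real.cosh (2 * π * x / 3) - Real.cos (2 * π * c)) ^ 2)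

lemma one_sub_cos_eq (c : ℝ) :
    1 - Real.cos (2 * π * c) = 2 * Real.sin (π * c) ^ 2 := by
  have h : (2 : ℝ) * π * c = 2 * (π * c) := by ring
  rw [h, Real.cos_two_mul, ← Real.sin_sq_add_cos_sq (π * c)]
  ring

lemma sin_pi_c_ge (c : ℝ) (hc0 : 0 < c) (hc1 : c < 1) :
    2 * min c (1 - c) ≤ Real.sin (π * c) := by
  have hpi := Real.pi_gt_three
  rcases le_total c (1/2) with hc | hc
  · have h := Real.mul_le_sin (x := π * c) (by positivity) (by nlinarith)
    have heq : 2 / π * (π * c) = 2 * c := by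
      field_simp
    rw [heq] at h
    have hmin := min_le_left c (1 - c)
    linarith
  · have hsym : Real.sin (π * c) = Real.sin (π * (1 - c)) := by
      rw [show π * (1 - c) = π - π * c by ring, Real.sin_pi_sub]
    have h := Real.mul_le_sin (x := π * (1 - c)) (by nlinarith) (by nlinarith)
    have heq : 2 / π * (π * (1 - c)) = 2 * (1 - c) := by
      field_simp
    rw [heq] at h
    have hmin := min_le_right c (1 - c)
    rw [hsym]
    linarith

set_option maxHeartbeats 1000000 in
lemma Gfun_hasDerivAt (c : ℝ) (hc0 : 0 < c) (hc1 : c < 1) (x : ℝ) :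
    HasDerivAt (Gfun c) (Gfun' c x) x := by
  have hku : ∀ y : ℝ, 2 * π / 3 * y = 2 * π * y / 3 := fun y => by ring
  have hd_pos : 0 < Real.cosh (2 * π * x / 3) - Real.cos (2 * π * c) := by
    have hs : 0 < Real.sin (π * c) := Real.sin_pos_of_pos_of_lt_pi (by positivity)
      (by nlinarith [Real.pi_pos])
    have h1 := one_sub_cos_eq c
    nlinarith [Real.one_le_cosh (2 * π * x / 3)]
  have hd_ne : Real.cosh (2 * π * x / 3) - Real.cos (2 * π * c) ≠ 0 := ne_of_gt hd_pos
  have hlin : HasDerivAt (fun y : ℝ => 2 * π / 3 * y) (2 * π / 3) x := by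
    simpa using (hasDerivAt_id x).const_mul (2 * π / 3)
  have hsinh : HasDerivAt (fun y : ℝ => Real.sinh (2 * π * y / 3))
      (2 * π / 3 * Real.cosh (2 * π * x / 3)) x := by
    have h : HasDerivAt (fun y : ℝ => Real.sinh (2 * π / 3 * y))
        (Real.cosh (2 * π / 3 * x) * (2 * π / 3)) x :=
      (Real.hasDerivAt_sinh _).comp x hlin
    simp only [hku] at h
    convert h using 1
    ring
  have hcosh : HasDerivAt (fun y : ℝ => Real.cosh (2 * π * y / 3) - Real.cos (2 * π * c))
      (2 * π / 3 * Real.sinh (2 * π * x / 3)) x := by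
    have h : HasDerivAt (fun y : ℝ => Real.cosh (2 * π / 3 * y) - Real.cos (2 * π * c))
        (Real.sinh (2 * π / 3 * x) * (2 * π / 3)) x :=
      ((Real.hasDerivAt_cosh _).comp x hlin).sub_const _
    simp only [hku] at h
    convert h using 1
    ring
  have hq := hsinh.div hcosh hd_ne
  have hx2 : HasDerivAt (fun y : ℝ => y ^ 2) (2 * x) x := by
    simpa using hasDerivAt_pow 2 x
  have hmul := hx2.mul hq
  have hcc : Real.cosh (2 * π * x / 3) ^ 2 - Real.sinh (2 * π * x / 3) ^ 2 = 1 := by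
    have := Real.cosh_sq_sub_sinh_sq (2 * π * x / 3)
    linarith
  have hnum : (2 * π / 3) * (1 - Real.cos (2 * π * c) * Real.cosh (2 * π * x / 3)) =
      2 * π / 3 * Real.cosh (2 * π * x / 3) *
        (Real.cosh (2 * π * x / 3) - Real.cos (2 * π * c)) -
      Real.sinh (2 * π * x / 3) * (2 * π / 3 * Real.sinh (2 * π * x / 3)) := by
    linear_combination (-(2 * π / 3)) * hcc
  have hG'eq : Gfun' c x = 2 * x * (Real.sinh (2 * π * x / 3) /
      (Real.cosh (2 * π * x / 3) - Real.cos (2 * π * c))) + x ^ 2 *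
      ((2 * π / 3 * Real.cosh (2 * π * x / 3) *
        (Real.cosh (2 * π * x / 3) - Real.cos (2 * π * c)) -
        Real.sinh (2 * π * x / 3) * (2 * π / 3 * Real.sinh (2 * π * x / 3))) /
        (Real.cosh (2 * π * x / 3) - Real.cos (2 * π * c)) ^ 2) := by
    simp only [Gfun']
    rw [hnum]
  rw [hG'eq]
  exact hmul

set_option maxHeartbeats 2000000 in
lemma Gfun'_bound (c : ℝ) (hc0 : 0 < c) (hc1 : c < 1) (x : ℝ) :
    |Gfun' c x| ≤ 4 * (1 / c ^ 2 + 1 / (1 - c) ^ 2) * x ^ 2 := by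
  set m : ℝ := min c (1 - c) with hm
  clear_value m
  have hm0 : 0 < m := by rw [hm]; exact lt_min hc0 (by linarith)
  have hm2 : m ≤ 1 / 2 := by
    rw [hm]
    rcases le_total c (1/2) with h | h
    · exact le_trans (min_le_left _ _) h
    · exact le_trans (min_le_right _ _) (by linarith)
  set u : ℝ := 2 * π * x / 3 with hu
  set d : ℝ := Real.cosh u - Real.cos (2 * π * c) with hd
  clear_value u d
  have hσ : 2 * m ≤ Real.sin (π * c) := by rw [hm]; exact sin_pi_c_ge c hc0 hc1
  have hσ0 : (0:ℝ) ≤ Real.sin (π * c) := le_trans (by positivity) hσ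
  have hσ2 : 4 * m ^ 2 ≤ Real.sin (π * c) ^ 2 := by nlinarith
  have hd_ge : 8 * m ^ 2 ≤ d := by
    rw [hd]
    have h1 := one_sub_cos_eq c
    nlinarith [Real.one_le_cosh u]
  have hd_pos : 0 < d := by nlinarith
  have hcosh_le : Real.cosh u ≤ d + 1 := by
    have := Real.cos_le_one (2 * π * c)
    rw [hd]; linarith
  have hcos_le : Real.cosh u - 1 ≤ d := by
    have := Real.cos_le_one (2 * π * c)
    rw [hd]; linarith
  have h1cos_le : 1 - Real.cos (2 * π * c) ≤ d := by
    have := Real.one_le_cosh u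
    rw [hd]; linarith
  have hpi4 := Real.pi_le_four
  have hpi3 := Real.pi_gt_three
  have hcosh_pos : (0:ℝ) < Real.cosh u := Real.cosh_pos u
  -- bound on g = sinh u / d
  have hg : |Real.sinh u / d| ≤ |x| / m ^ 2 := by
    have h1 : |Real.sinh u| ≤ |u| * Real.cosh u := abs_sinh_le_abs_mul_cosh u
    have h2 : |u| = 2 * π / 3 * |x| := by
      rw [hu, show 2 * π * x / 3 = (2 * π / 3) * x by ring, abs_mul,
        abs_of_nonneg (by positivity : (0:ℝ) ≤ 2 * π / 3)]
    rw [abs_div, abs_of_pos hd_pos, div_le_div_iff₀ hd_pos (by positivity)]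
    calc |Real.sinh u| * m ^ 2 ≤ (2 * π / 3 * |x|) * Real.cosh u * m ^ 2 := by
          rw [← h2]; nlinarith [abs_nonneg (Real.sinh u), mul_le_mul_of_nonneg_right h1
            (by positivity : (0:ℝ) ≤ m ^ 2)]
      _ ≤ |x| * d := by
          have hm4 : m ^ 2 ≤ 1 / 4 := by nlinarith
          have hX : m ^ 2 * Real.cosh u ≤ 3 * d / 8 := by nlinarith
          have hstep : 2 * π / 3 * Real.cosh u * m ^ 2 ≤ d := by
            nlinarith [mul_le_mul_of_nonneg_left hX (by positivity : (0:ℝ) ≤ 2 * π / 3),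
              mul_nonneg (by linarith : (0:ℝ) ≤ 4 - π) hd_pos.le,
              mul_nonneg (by positivity : (0:ℝ) ≤ m ^ 2) hcosh_pos.le]
          nlinarith [mul_le_mul_of_nonneg_left hstep (abs_nonneg x)]
  -- bound on g'
  have hg' : |(2 * π / 3) * (1 - Real.cos (2 * π * c) * Real.cosh u) / d ^ 2| ≤ 2 / m ^ 2 := by
    have hnum : |1 - Real.cos (2 * π * c) * Real.cosh u| ≤
        Real.cosh u * (1 - Real.cos (2 * π * c)) + (Real.cosh u - 1) := by
      have heq : 1 - Real.cos (2 * π * c) * Real.cosh u =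
          Real.cosh u * (1 - Real.cos (2 * π * c)) - (Real.cosh u - 1) := by ring
      rw [heq]
      have h1 : 0 ≤ Real.cosh u * (1 - Real.cos (2 * π * c)) := by
        nlinarith [Real.cos_le_one (2 * π * c)]
      have h2 : 0 ≤ Real.cosh u - 1 := by linarith [Real.one_le_cosh u]
      rw [abs_sub_le_iff]
      constructor <;> linarith
    rw [abs_div, abs_mul, abs_of_nonneg (by positivity : (0:ℝ) ≤ 2 * π / 3),
      abs_of_nonneg (by positivity : (0:ℝ) ≤ d ^ 2),
      div_le_div_iff₀ (by positivity) (by positivity)]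
    have hA : 0 ≤ 1 - Real.cos (2 * π * c) := by
      have := Real.cos_le_one (2 * π * c); linarith
    have hB : (0:ℝ) ≤ d + 1 := by linarith
    have hkey : Real.cosh u * (1 - Real.cos (2 * π * c)) ≤ (d + 1) * d :=
      mul_le_mul hcosh_le h1cos_le hA hB
    have hnum2 : |1 - Real.cos (2 * π * c) * Real.cosh u| ≤ (d + 1) * d + d := by
      linarith
    have h5 : |1 - Real.cos (2 * π * c) * Real.cosh u| * m ^ 2 ≤ ((d + 1) * d + d) * m ^ 2 :=
      mul_le_mul_of_nonneg_right hnum2 (by positivity)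
    have hm4 : m ^ 2 ≤ 1 / 4 := by nlinarith
    have hq1 : d ^ 2 * m ^ 2 ≤ d ^ 2 / 4 := by nlinarith [sq_nonneg d]
    have hq2 : d * m ^ 2 ≤ d ^ 2 / 8 := by nlinarith [hd_pos]
    have hq3 : |1 - Real.cos (2 * π * c) * Real.cosh u| * m ^ 2 ≤ d ^ 2 / 2 := by
      nlinarith [h5]
    nlinarith [hq3, mul_nonneg (abs_nonneg (1 - Real.cos (2 * π * c) * Real.cosh u))
      (sq_nonneg m), hpi4, sq_nonneg d]
  have hmD : 1 / m ^ 2 ≤ 1 / c ^ 2 + 1 / (1 - c) ^ 2 := by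
    rw [hm]
    rcases min_choice c (1 - c) with h | h
    · rw [h]
      have : (0:ℝ) < 1 / (1 - c) ^ 2 :=
        div_pos one_pos (pow_pos (by linarith) 2)
      linarith
    · rw [h]
      have : (0:ℝ) < 1 / c ^ 2 := div_pos one_pos (pow_pos hc0 2)
      linarith
  have t1 : |2 * x * (Real.sinh u / d)| ≤ 2 * |x| * (|x| / m ^ 2) := by
    rw [abs_mul, abs_mul, abs_of_nonneg (by norm_num : (0:ℝ) ≤ 2)]
    exact mul_le_mul_of_nonneg_left hg (by positivity)
  have t2 : |x ^ 2 * ((2 * π / 3) * (1 - Real.cos (2 * π * c) * Real.cosh u) / d ^ 2)|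
      ≤ x ^ 2 * (2 / m ^ 2) := by
    rw [abs_mul, abs_pow, sq_abs]
    exact mul_le_mul_of_nonneg_left hg' (sq_nonneg x)
  have habs : |Gfun' c x| ≤ 2 * |x| * (|x| / m ^ 2) + x ^ 2 * (2 / m ^ 2) := by
    simp only [Gfun']
    rw [← hu, ← hd]
    calc |2 * x * (Real.sinh u / d) + x ^ 2 * ((2 * π / 3) *
          (1 - Real.cos (2 * π * c) * Real.cosh u) / d ^ 2)|
        ≤ |2 * x * (Real.sinh u / d)| + |x ^ 2 * ((2 * π / 3) *
          (1 - Real.cos (2 * π * c) * Real.cosh u) / d ^ 2)| := abs_add_le _ _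
      _ ≤ 2 * |x| * (|x| / m ^ 2) + x ^ 2 * (2 / m ^ 2) := add_le_add t1 t2
  have hxx : |x| * |x| = x ^ 2 := by rw [← abs_mul, abs_mul_self, sq]
  calc |Gfun' c x| ≤ 2 * |x| * (|x| / m ^ 2) + x ^ 2 * (2 / m ^ 2) := habs
    _ = 4 * (1 / m ^ 2) * x ^ 2 := by
        field_simp
        nlinarith [hxx]
    _ ≤ 4 * (1 / c ^ 2 + 1 / (1 - c) ^ 2) * x ^ 2 := by nlinarith [sq_nonneg x]

set_option maxHeartbeats 1000000 in
theorem Gfun_diff_bound : ∃ C : ℝ, ∀ c : ℝ, 0 < c → c < 1 → ∀ w₁ w₂ : ℝ, w₁ ≠ 0 →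
    (1 / |w₁|) * |Gfun c w₂ - Gfun c (w₂ + w₁ / 2)|
      ≤ C * (w₁ ^ 2 + w₂ ^ 2 + |w₂|) * (1 / c ^ 2 + 1 / (1 - c) ^ 2) := by
  refine ⟨12, fun c hc0 hc1 w₁ w₂ hw₁ => ?_⟩
  set D : ℝ := 1 / c ^ 2 + 1 / (1 - c) ^ 2 with hD
  clear_value D
  have hD0 : 0 < D := by
    have h1 : (0:ℝ) < 1 / c ^ 2 := by positivity
    have h2 : (0:ℝ) < 1 / (1 - c) ^ 2 :=
      div_pos one_pos (pow_pos (by linarith) 2)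
    rw [hD]; linarith
  set a : ℝ := w₂ with ha
  set b : ℝ := w₂ + w₁ / 2 with hb
  clear_value a b
  set s : Set ℝ := Set.Icc (min a b) (max a b) with hs
  have hsq : ∀ p q y : ℝ, p ≤ y → y ≤ q → y ^ 2 ≤ p ^ 2 + q ^ 2 := by
    intro p q y h1 h2
    rcases le_total 0 y with h | h
    · nlinarith [sq_nonneg (q - y), mul_nonneg (sub_nonneg.2 h2) h, sq_nonneg p]
    · nlinarith [sq_nonneg (p - y), mul_nonneg (sub_nonneg.2 h1) (neg_nonneg.2 h),
        sq_nonneg q]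
  have hM : ∀ x ∈ s, ‖Gfun' c x‖ ≤ 4 * D * (3 * (w₁ ^ 2 + w₂ ^ 2)) := by
    intro x hx
    have hx2 : x ^ 2 ≤ 3 * (w₁ ^ 2 + w₂ ^ 2) := by
      obtain ⟨h1, h2⟩ := hx
      have hmm : min a b ≤ x := h1
      have hxx : x ≤ max a b := h2
      have h3 := hsq (min a b) (max a b) x hmm hxx
      have h4 : (min a b) ^ 2 + (max a b) ^ 2 = a ^ 2 + b ^ 2 := by
        rcases le_total a b with hab | hab
        · rw [min_eq_left hab, max_eq_right hab]
        · rw [min_eq_right hab, max_eq_left hab]; ring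
      rw [h4, ha, hb] at h3
      nlinarith [sq_nonneg (w₂ - w₁ / 2), sq_nonneg w₁, sq_nonneg w₂]
    have hb' := Gfun'_bound c hc0 hc1 x
    rw [← hD] at hb'
    rw [Real.norm_eq_abs]
    calc |Gfun' c x| ≤ 4 * D * x ^ 2 := hb'
      _ ≤ 4 * D * (3 * (w₁ ^ 2 + w₂ ^ 2)) := by nlinarith
  have hconv : Convex ℝ s := convex_Icc _ _
  have hderiv : ∀ x ∈ s, HasDerivWithinAt (Gfun c) (Gfun' c x) s x :=
    fun x _ => (Gfun_hasDerivAt c hc0 hc1 x).hasDerivWithinAt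
  have has : a ∈ s := ⟨min_le_left _ _, le_max_left _ _⟩
  have hbs : b ∈ s := ⟨min_le_right _ _, le_max_right _ _⟩
  have hmvt := hconv.norm_image_sub_le_of_norm_hasDerivWithin_le hderiv hM hbs has
  rw [Real.norm_eq_abs, Real.norm_eq_abs] at hmvt
  have hab : a - b = -(w₁ / 2) := by rw [ha, hb]; ring
  rw [hab, abs_neg, abs_div, abs_of_nonneg (by norm_num : (0:ℝ) ≤ 2)] at hmvt
  have hw1 : 0 < |w₁| := abs_pos.2 hw₁
  rw [div_mul_eq_mul_div, one_mul, div_le_iff₀ hw1]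
  rw [ha, hb] at hmvt ⊢
  calc |Gfun c w₂ - Gfun c (w₂ + w₁ / 2)|
      ≤ 4 * D * (3 * (w₁ ^ 2 + w₂ ^ 2)) * (|w₁| / 2) := hmvt
    _ ≤ 12 * (w₁ ^ 2 + w₂ ^ 2 + |w₂|) * D * |w₁| := by
        nlinarith [abs_nonneg w₂, abs_nonneg w₁, hD0, sq_nonneg w₁, sq_nonneg w₂,
          mul_pos hD0 hw1, mul_nonneg (mul_nonneg hD0.le hw1.le) (abs_nonneg w₂)]
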